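/- Let K ⊂ Γ be compact and β > 0. Then there exists a constant C > 0, depending only on m, f, K and β, with the following property: whenever λ ∈ Γ, μ ∈ K with f(μ) ≥ f(λ), and r ∈ {1,…,m} is an index with λ_r ≥ 0 and f_r(λ) ≥ β ∑_{j=1}^m f_j(λ), one has f_r(λ)λ_r² ≤ C (∑_{i ≠ r} f_i(λ)λ_i² + ∑_{i=1}^m f_i(λ)). -/

import Mathlib

open Filter Topology

/-- The `i`-th partial derivative `fᵢ(x) = ∂f/∂λᵢ(x)`. -/
noncomputable def pd {m : ℕ} (f : (Fin m → ℝ) → ℝ) (x : Fin m → ℝ) (i : Fin m) : ℝ :=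
  fderiv ℝ f x (Pi.single i 1)

/-- The Euclidean norm of a vector in `ℝ^m`. -/
noncomputable def eNorm {m : ℕ} (v : Fin m → ℝ) : ℝ :=
  Real.sqrt (∑ i, (v i) ^ 2)

/-- The unit normal `ν_x = Df(x)/|Df(x)|`. -/
noncomputable def nuv {m : ℕ} (f : (Fin m → ℝ) → ℝ) (x : Fin m → ℝ) : Fin m → ℝ :=
  fun i => pd f x i / eNorm (pd f x)

/-- Gradient inequality for concave functions. -/
theorem concave_grad' {m : ℕ} {Γ : Set (Fin m → ℝ)} {f : (Fin m → ℝ) → ℝ}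
    (hf2 : ConcaveOn ℝ Γ f)
    {lam μ : Fin m → ℝ} (hlam : lam ∈ Γ) (hμ : μ ∈ Γ)
    (hdiff : DifferentiableAt ℝ f lam) :
    f μ - f lam ≤ fderiv ℝ f lam (μ - lam) := by
  set v := μ - lam with hv
  set g : ℝ → (Fin m → ℝ) := fun t => lam + t • v with hg
  have hgd : HasDerivAt (fun t => f (g t)) (fderiv ℝ f lam v) 0 := by
    have h1 : HasDerivAt g v 0 := by
      have : HasDerivAt (fun t : ℝ => t • v) ((1:ℝ) • v) 0 := (hasDerivAt_id 0).smul_const v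
      have h := this.const_add lam
      rw [one_smul] at h
      exact h
    have h2 : HasFDerivAt f (fderiv ℝ f lam) (g 0) := by
      simpa [hg] using hdiff.hasFDerivAt
    exact h2.comp_hasDerivAt 0 h1
  have hslope : Tendsto (slope (fun t => f (g t)) 0) (𝓝[≠] 0) (𝓝 (fderiv ℝ f lam v)) :=
    hasDerivAt_iff_tendsto_slope.1 hgd
  have hmono : (𝓝[>] (0:ℝ)) ≤ 𝓝[≠] 0 :=
    nhdsWithin_mono _ (fun x hx => ne_of_gt hx)
  have hev : ∀ᶠ t in 𝓝[>] (0:ℝ), f μ - f lam ≤ slope (fun t => f (g t)) 0 t := by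
    filter_upwards [Ioo_mem_nhdsGT_of_mem (by norm_num : (0:ℝ) ∈ Set.Ico 0 1)] with t ht
    obtain ⟨ht0, ht1⟩ := ht
    have hc := hf2.2 hlam hμ (show (0:ℝ) ≤ 1 - t by linarith) ht0.le
      (show (1 - t) + t = 1 by ring)
    have hgt : g t = (1 - t) • lam + t • μ := by
      funext i
      simp only [hg, hv, Pi.add_apply, Pi.smul_apply, Pi.sub_apply, smul_eq_mul]
      ring
    have hgt0 : g 0 = lam := by simp [hg]
    have hkey : f lam + t * (f μ - f lam) ≤ f (g t) := by
      rw [hgt]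
      have : (1 - t) * f lam + t * f μ ≤ f ((1-t) • lam + t • μ) := by
        simpa [smul_eq_mul] using hc
      linarith
    rw [slope_def_field, hgt0]
    rw [le_div_iff₀ (by linarith : (0:ℝ) < t - 0)]
    linarith
  exact ge_of_tendsto (hslope.mono_left hmono) hev

set_option maxHeartbeats 1000000 in
/-- inequalities (6.12)–(6.14): for compact `K ⊂ Γ` and `β > 0` there is
`C > 0` such that whenever `λ ∈ Γ`, `μ ∈ K` with `f(μ) ≥ f(λ)`, and `r` is an index with
`λ_r ≥ 0` and `f_r(λ) ≥ β ∑ⱼ fⱼ(λ)`, then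
`f_r λ_r² ≤ C (∑_{i≠r} fᵢλᵢ² + ∑ᵢ fᵢ)`. -/
theorem stmt_7 (m : ℕ) (hm : 2 ≤ m)
    (Γ : Set (Fin m → ℝ)) (f : (Fin m → ℝ) → ℝ)
    (hΓopen : IsOpen Γ) (hΓconv : Convex ℝ Γ) (hΓne : Γ.Nonempty)
    (hΓproper : Γ ≠ Set.univ)
    (hΓcone : ∀ t : ℝ, 0 < t → ∀ x ∈ Γ, t • x ∈ Γ)
    (hΓperm : ∀ π : Equiv.Perm (Fin m), ∀ x ∈ Γ, x ∘ π ∈ Γ)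
    (hΓpos : {x : Fin m → ℝ | ∀ i, 0 < x i} ⊆ Γ)
    (hfsmooth : ContDiffOn ℝ (⊤ : ℕ∞) f Γ)
    (hfsymm : ∀ π : Equiv.Perm (Fin m), ∀ x ∈ Γ, f (x ∘ π) = f x)
    (hf1 : ∀ x ∈ Γ, ∀ i, 0 < pd f x i)
    (hf2 : ConcaveOn ℝ Γ f)
    (K : Set (Fin m → ℝ)) (hK : IsCompact K) (hKΓ : K ⊆ Γ)
    (β : ℝ) (hβ : 0 < β) :
    ∃ C : ℝ, 0 < C ∧ ∀ lam ∈ Γ, ∀ μ ∈ K, f lam ≤ f μ →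
      ∀ r : Fin m, 0 ≤ lam r → β * ∑ j, pd f lam j ≤ pd f lam r →
      pd f lam r * (lam r) ^ 2
        ≤ C * ((∑ i ∈ Finset.univ.erase r, pd f lam i * (lam i) ^ 2) + ∑ i, pd f lam i) := by
  -- a bound on K
  obtain ⟨r₀, hr₀⟩ := hK.isBounded.subset_closedBall 0
  set R : ℝ := max r₀ 1 with hRdef
  have hR1 : (1:ℝ) ≤ R := le_max_right _ _
  have hR0 : (0:ℝ) ≤ R := by linarith
  have hRbound : ∀ μ ∈ K, ∀ i, |μ i| ≤ R := by
    intro μ hμ i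
    have h1 : ‖μ‖ ≤ r₀ := by
      have := hr₀ hμ
      simpa [Metric.mem_closedBall, dist_zero_right] using this
    have h2 : |μ i| ≤ ‖μ‖ := by
      simpa using norm_le_pi_norm μ i
    exact le_trans h2 (le_trans h1 (le_max_left _ _))
  refine ⟨(2*β + 2*R^2)/β^2, by positivity, ?_⟩
  intro lam hlam μ hμ hfle r hL0 hβr
  haveI : Nonempty (Fin m) := ⟨⟨0, by omega⟩⟩
  set F : ℝ := pd f lam r with hFdef
  set L : ℝ := lam r with hLdef
  set S : ℝ := ∑ j, pd f lam j with hSdef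
  set A : ℝ := ∑ i ∈ Finset.univ.erase r, pd f lam i * (lam i)^2 with hAdef
  set B : ℝ := ∑ i ∈ Finset.univ.erase r, pd f lam i * lam i with hBdef
  set S' : ℝ := ∑ i ∈ Finset.univ.erase r, pd f lam i with hS'def
  have hF : 0 < F := hf1 lam hlam r
  have hS : 0 < S := Finset.sum_pos (fun i _ => hf1 lam hlam i) Finset.univ_nonempty
  have hA : 0 ≤ A := Finset.sum_nonneg (fun i _ => mul_nonneg (hf1 lam hlam i).le (sq_nonneg _))
  have hS'0 : 0 ≤ S' := Finset.sum_nonneg (fun i _ => (hf1 lam hlam i).le)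
  have hFS' : F + S' = S := by
    rw [hFdef, hS'def, hSdef]
    exact Finset.add_sum_erase _ _ (Finset.mem_univ r)
  have hFS : F ≤ S := by linarith
  have hS'S : S' ≤ S := by linarith
  -- differentiability
  have hdiff : DifferentiableAt ℝ f lam :=
    (hfsmooth.contDiffAt (hΓopen.mem_nhds hlam)).differentiableAt (by simp)
  -- linearity of the differential
  have hlin : fderiv ℝ f lam (μ - lam) = ∑ i, (μ i - lam i) * pd f lam i := by
    have hw : μ - lam = ∑ i : Fin m, (μ i - lam i) • (Pi.single i 1 : Fin m → ℝ) := by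
      funext j
      simp [Finset.sum_apply, Pi.single_apply, Finset.sum_ite_eq]
    rw [hw, map_sum]
    simp [pd, smul_eq_mul]
  have hgrad := concave_grad' hf2 hlam (hKΓ hμ) hdiff
  have hsum1 : 0 ≤ ∑ i, (μ i - lam i) * pd f lam i := by
    rw [← hlin]; linarith
  have hsplit : ∑ i, (μ i - lam i) * pd f lam i
      = (∑ i, pd f lam i * μ i) - (F*L + B) := by
    have h2 : ∑ i, pd f lam i * lam i = F*L + B := by
      rw [hFdef, hLdef, hBdef, ← Finset.add_sum_erase _ _ (Finset.mem_univ r)]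
    rw [← h2, ← Finset.sum_sub_distrib]
    exact Finset.sum_congr rfl (fun i _ => by ring)
  have hsum3 : ∑ i, pd f lam i * μ i ≤ R * S := by
    rw [hSdef, Finset.mul_sum]
    apply Finset.sum_le_sum
    intro i _
    have hfi := hf1 lam hlam i
    have habs := abs_le.mp (hRbound μ hμ i)
    nlinarith [habs.2]
  have h1 : F*L + B ≤ R*S := by
    rw [hsplit] at hsum1; linarith
  -- pointwise AM-GM, summed
  have h3 : -(β*L*B) ≤ A + (β^2/4)*L^2*S' := by
    have hpt : ∀ i ∈ Finset.univ.erase r,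
        -(β*L*(pd f lam i * lam i)) ≤ pd f lam i * (lam i)^2 + (β^2/4)*L^2*(pd f lam i) := by
      intro i _
      have hfi := hf1 lam hlam i
      nlinarith [mul_nonneg hfi.le (sq_nonneg (lam i + (β/2)*L))]
    have hsle := Finset.sum_le_sum hpt
    have e1 : ∑ i ∈ Finset.univ.erase r, -(β*L*(pd f lam i * lam i)) = -(β*L*B) := by
      rw [hBdef, Finset.mul_sum, ← Finset.sum_neg_distrib]
    have e2 : ∑ i ∈ Finset.univ.erase r,
        (pd f lam i * (lam i)^2 + (β^2/4)*L^2*(pd f lam i))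
        = A + (β^2/4)*L^2*S' := by
      rw [Finset.sum_add_distrib, hAdef, hS'def, ← Finset.mul_sum]
    rw [e1, e2] at hsle
    exact hsle
  -- assemble, all scaled by powers of β to stay polynomial
  have c1 := mul_le_mul_of_nonneg_left h1
    (mul_nonneg (mul_nonneg hβ.le hβ.le) hL0)
  have c2 := mul_le_mul_of_nonneg_left h3 hβ.le
  have c3 : (β^3/4)*L^2*S' ≤ (β^2/4)*F*L^2 := by
    have ha := mul_le_mul_of_nonneg_left hS'S (show (0:ℝ) ≤ β^3/4*L^2 by positivity)
    have hb := mul_le_mul_of_nonneg_left hβr (show (0:ℝ) ≤ β^2/4*L^2 by positivity)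
    nlinarith [ha, hb]
  have c4 := mul_le_mul_of_nonneg_left hβr
    (show (0:ℝ) ≤ β*R*L by positivity)
  have c5 : β*(R*F*L) ≤ (β^2/4)*F*L^2 + R^2*F := by
    nlinarith [mul_nonneg hF.le (sq_nonneg (β*L - 2*R))]
  have c6 := mul_le_mul_of_nonneg_left hFS (sq_nonneg R)
  have key : β^2*(F*L^2) ≤ 2*β*A + 2*R^2*S := by linarith [c1, c2, c3, c4, c5, c6]
  -- conclude
  have hfin : β^2*(F*L^2) ≤ β^2*(((2*β + 2*R^2)/β^2)*(A+S)) := by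
    have heq : β^2*(((2*β + 2*R^2)/β^2)*(A+S)) = (2*β + 2*R^2)*(A+S) := by
      field_simp
    rw [heq]
    nlinarith [key, mul_nonneg hβ.le hS.le, mul_nonneg (sq_nonneg R) hA]
  exact le_of_mul_le_mul_left hfin (by positivity)
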